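/- arXiv:1605.09349 — 4 statements merged into one kernel-verified Lean document; each statement's English description precedes it below -/
import Mathlib

section
/- Let ξ be a random variable on a finite support {s_1, ..., s_k}, and let data yield counts n_1, ..., n_k summing to n with empirical frequencies p̂_i = n_i/n. For any probability vector p = (p_1, ..., p_k), the maximum of ∑_{i=1}^k ∑_{j=1}^{n_i} log(n w_{ij}) over weights w_{ij} ≥ 0 with ∑_{j=1}^{n_i} w_{ij} = p_i for each i is attained at w_{ij} = p_i/n_i, and equals ∑_{i=1}^k n_i log(n p_i/n_i). Consequently min/max of ∑_{i=1}^k h(s_i) ∑_j w_{ij} over the empirical Burg ball U_n(η) equals min/max of ∑_{i=1}^k h(s_i) p_i over {p : -∑_i p̂_i log(p_i/p̂_i) ≤ η, ∑_i p_i = 1, p_i ≥ 0}. -/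
open Finset

lemma jensen_log (M : ℕ) (hM : 1 ≤ M) (N p : ℝ) (hN : 0 < N) (hp : 0 < p)
    (w : Fin M → ℝ) (hw : ∀ j, 0 < w j) (hs : ∑ j, w j = p) :
    ∑ j, Real.log (N * w j) ≤ (M : ℝ) * Real.log (N * p / M) := by
  have hM' : (0:ℝ) < M := by exact_mod_cast hM
  have key : ∀ j, Real.log (N * w j) ≤ Real.log (N * p / M) + (w j * M / p - 1) := by
    intro j
    have hwj := hw j
    have h1 : Real.log (w j * M / p) ≤ w j * M / p - 1 :=
      Real.log_le_sub_one_of_pos (by positivity)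
    have h2 : Real.log (N * w j) = Real.log (N * p / M) + Real.log (w j * M / p) := by
      rw [← Real.log_mul (by positivity) (by positivity)]
      congr 1; field_simp
    linarith
  calc ∑ j, Real.log (N * w j)
      ≤ ∑ j, (Real.log (N * p / M) + (w j * M / p - 1)) :=
        Finset.sum_le_sum fun j _ => key j
    _ = (M:ℝ) * Real.log (N * p / M) + ((∑ j, w j) * M / p - M) := by
        rw [Finset.sum_add_distrib, Finset.sum_const, Finset.card_fin]
        rw [Finset.sum_sub_distrib, Finset.sum_const, Finset.card_fin]
        rw [← Finset.sum_div, ← Finset.sum_mul]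
        push_cast; ring
    _ = (M:ℝ) * Real.log (N * p / M) := by
        rw [hs]; field_simp; ring

lemma mcancel (a b : ℝ) (hb : b ≠ 0) : b * (a / b) = a := by
  field_simp

lemma const_sum (M : ℕ) (c : ℝ) : ∑ _j : Fin M, c = (M : ℝ) * c := by
  rw [Finset.sum_const, Finset.card_fin]; push_cast; ring

/-- Reduction of the empirical Burg ball DRO to the grouped (histogram) form.
With counts `m i ≥ 1` on `k` support points summing to `n`:
(1) For any probability vector `p` with positive entries, the maximum of
`∑ i ∑ j log (n * w i j)` over positive weights with row sums `∑ j w i j = p i`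
is attained at `w i j = p i / m i`, and equals `∑ i m i * log (n * p i / m i)`.
(2) Consequently, the set of values `∑ i h(s_i) ∑ j w i j` over the empirical Burg
ball `U_n(η)` equals the set of values `∑ i h(s_i) p i` over
`{p : -∑ i p̂ i * log (p i / p̂ i) ≤ η, ∑ p i = 1, p i > 0}` with `p̂ i = m i / n`. -/
theorem empirical_ball_discrete_reduction (k : ℕ) (hk : 1 ≤ k)
    (m : Fin k → ℕ) (hm : ∀ i, 1 ≤ m i) (n : ℕ) (hn : n = ∑ i, m i)
    (h : Fin k → ℝ) (η : ℝ) (hη : 0 < η) :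
    (∀ p : Fin k → ℝ, (∀ i, 0 < p i) →
      (∀ w : (i : Fin k) → Fin (m i) → ℝ,
        (∀ i j, 0 < w i j) → (∀ i, ∑ j, w i j = p i) →
        ∑ i, ∑ j, Real.log (n * w i j) ≤ ∑ i, (m i : ℝ) * Real.log (n * p i / m i)) ∧
      (∀ i, ∑ _j : Fin (m i), (p i / m i) = p i) ∧
      (∑ i, ∑ _j : Fin (m i), Real.log (n * (p i / m i))
        = ∑ i, (m i : ℝ) * Real.log (n * p i / m i))) ∧
    {v : ℝ | ∃ w : (i : Fin k) → Fin (m i) → ℝ,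
        (∀ i j, 0 < w i j) ∧ (∑ i, ∑ j, w i j = 1) ∧
        (-(1 / (n : ℝ)) * ∑ i, ∑ j, Real.log (n * w i j) ≤ η) ∧
        v = ∑ i, h i * ∑ j, w i j}
      = {v : ℝ | ∃ p : Fin k → ℝ,
        (∀ i, 0 < p i) ∧ (∑ i, p i = 1) ∧
        (-∑ i, ((m i : ℝ) / n) * Real.log (p i / ((m i : ℝ) / n)) ≤ η) ∧
        v = ∑ i, h i * p i} := by
  have hkne : Nonempty (Fin k) := ⟨⟨0, hk⟩⟩
  have hn0 : 0 < n := by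
    rw [hn]; exact Finset.sum_pos (fun i _ => hm i) Finset.univ_nonempty
  have hnR : (0:ℝ) < n := by exact_mod_cast hn0
  have hmR : ∀ i, (0:ℝ) < m i := fun i => by exact_mod_cast hm i
  -- key: the optimal value expressed two ways
  have hopt : ∀ (p : Fin k → ℝ), (∀ i, 0 < p i) → ∀ i,
      ∑ _j : Fin (m i), Real.log ((n:ℝ) * (p i / m i)) = (m i : ℝ) * Real.log (n * p i / m i) := by
    intro p hp i
    rw [const_sum]
    congr 2
    rw [mul_div_assoc]
  have hconstr : ∀ i (pi : ℝ), 0 < pi →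
      ((m i : ℝ) / n) * Real.log (pi / ((m i : ℝ) / n))
        = (1 / (n:ℝ)) * ((m i : ℝ) * Real.log ((n:ℝ) * pi / m i)) := by
    intro i pi hpi
    have : pi / ((m i : ℝ) / n) = (n:ℝ) * pi / m i := by
      field_simp
    rw [this]; ring
  constructor
  · intro p hp
    refine ⟨?_, ?_, ?_⟩
    · intro w hw hwsum
      apply Finset.sum_le_sum
      intro i _
      exact jensen_log (m i) (hm i) n (p i) hnR (hp i) (w i) (hw i) (hwsum i)
    · intro i
      rw [const_sum]
      exact mcancel _ _ (hmR i).ne'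
    · exact Finset.sum_congr rfl fun i _ => hopt p hp i
  · ext v
    simp only [Set.mem_setOf_eq]
    constructor
    · rintro ⟨w, hw, hw1, hwη, hv⟩
      refine ⟨fun i => ∑ j, w i j, fun i => Finset.sum_pos (fun j _ => hw i j) ⟨⟨0, hm i⟩, Finset.mem_univ _⟩, hw1, ?_, hv⟩
      have hp : ∀ i, 0 < ∑ j, w i j := fun i => Finset.sum_pos (fun j _ => hw i j) ⟨⟨0, hm i⟩, Finset.mem_univ _⟩
      have hle : ∑ i, ∑ j, Real.log (n * w i j)
          ≤ ∑ i, (m i : ℝ) * Real.log (n * (∑ j, w i j) / m i) :=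
        Finset.sum_le_sum fun i _ =>
          jensen_log (m i) (hm i) n _ hnR (hp i) (w i) (hw i) rfl
      have : -∑ i, ((m i : ℝ) / n) * Real.log ((∑ j, w i j) / ((m i : ℝ) / n))
          = -(1/(n:ℝ)) * ∑ i, (m i : ℝ) * Real.log ((n:ℝ) * (∑ j, w i j) / m i) := by
        rw [Finset.sum_congr rfl fun i _ => hconstr i _ (hp i), ← Finset.mul_sum]
        ring
      rw [this]
      have h2 : -(1/(n:ℝ)) * ∑ i, (m i : ℝ) * Real.log ((n:ℝ) * (∑ j, w i j) / m i)
          ≤ -(1/(n:ℝ)) * ∑ i, ∑ j, Real.log (n * w i j) := by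
        apply mul_le_mul_of_nonpos_left hle
        have : (0:ℝ) < 1/(n:ℝ) := by positivity
        linarith
      linarith
    · rintro ⟨p, hp, hp1, hpη, hv⟩
      refine ⟨fun i _ => p i / m i, fun i j => by have := hp i; have := hmR i; positivity, ?_, ?_, ?_⟩
      · rw [Finset.sum_congr rfl fun i _ => ?_]
        · exact hp1
        · rw [const_sum]; exact mcancel _ _ (hmR i).ne'
      · have heq : ∑ i, ∑ _j : Fin (m i), Real.log ((n:ℝ) * (p i / m i))
            = ∑ i, (m i : ℝ) * Real.log ((n:ℝ) * p i / m i) :=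
          Finset.sum_congr rfl fun i _ => hopt p hp i
        rw [heq]
        have : -∑ i, ((m i : ℝ) / n) * Real.log (p i / ((m i : ℝ) / n))
            = -(1/(n:ℝ)) * ∑ i, (m i : ℝ) * Real.log ((n:ℝ) * p i / m i) := by
          rw [Finset.sum_congr rfl fun i _ => hconstr i _ (hp i), ← Finset.mul_sum]
          ring
        linarith [this ▸ hpη]
      · rw [hv]
        apply Finset.sum_congr rfl
        intro i _
        rw [const_sum, mcancel _ _ (hmR i).ne']
end

section
/- Let h̃_1, ..., h̃_n be real numbers with min_i h̃_i < 0 < max_i h̃_i. Then there exists λ ∈ (-1/max_i h̃_i, -1/min_i h̃_i) such that ∑_{i=1}^n h̃_i/(1 + λ h̃_i) = 0 and 1 + λ h̃_i > 0 for all i. -/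
open Finset

/-- Existence of the empirical likelihood Lagrange multiplier: if
`min_i h̃_i < 0 < max_i h̃_i`, there exists `λ` strictly between `-1/max_i h̃_i`
and `-1/min_i h̃_i` with `∑ i, h̃_i / (1 + λ h̃_i) = 0` and `1 + λ h̃_i > 0` for
all `i`. -/
theorem el_multiplier_exists (n : ℕ) (hn : 1 ≤ n) (h : Fin n → ℝ)
    (hne : (Finset.univ : Finset (Fin n)).Nonempty)
    (hmax : 0 < univ.sup' hne h) (hmin : univ.inf' hne h < 0) :
    ∃ lam : ℝ, lam ∈ Set.Ioo (-1 / univ.sup' hne h) (-1 / univ.inf' hne h) ∧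
      (∑ i, h i / (1 + lam * h i) = 0) ∧ (∀ i, 0 < 1 + lam * h i) := by
  set M := univ.sup' hne h with hMdef
  set m := univ.inf' hne h with hmdef
  have hMm : m < M := lt_trans hmin hmax
  have hmneg : (0:ℝ) < -m := by linarith
  have hnegM : -1/M = -(1/M) := neg_div _ _
  have hnegm : -1/m = -(1/m) := neg_div _ _
  have hMinv : (0:ℝ) < 1/M := by positivity
  have hminv : (0:ℝ) < 1/(-m) := by positivity
  have hminv' : -1/m = 1/(-m) := by rw [hnegm, ← one_div_neg_eq_neg_one_div]
  -- positivity of denominators on the open interval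
  have key : ∀ lam ∈ Set.Ioo (-1/M) (-1/m), ∀ i, 0 < 1 + lam * h i := by
    rintro lam ⟨hl1, hl2⟩ i
    have hiM : h i ≤ M := le_sup' h (mem_univ i)
    have him : m ≤ h i := inf'_le h (mem_univ i)
    have e1 : (-1/M) * M = -1 := by field_simp
    have e2 : (-1/m) * m = -1 := by field_simp [hmin.ne]
    have h1 : 0 < 1 + lam * M := by
      have := mul_lt_mul_of_pos_right hl1 hmax
      linarith
    have h2 : 0 < 1 + lam * m := by
      have := mul_lt_mul_of_neg_right hl2 hmin
      linarith
    rcases le_or_gt 0 lam with hl | hl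
    · have := mul_le_mul_of_nonneg_left him hl
      linarith
    · have := mul_le_mul_of_nonpos_left hiM hl.le
      linarith
  have hC : (0:ℝ) < 1 + n * (M - m) := by
    have : (0:ℝ) ≤ (n:ℝ) * (M - m) := mul_nonneg (Nat.cast_nonneg n) (by linarith)
    linarith
  set ε : ℝ := min (min (1/(2*M)) (1/(2*(-m)))) (1/(1 + n*(M-m))) with hεdef
  have hε : 0 < ε := by
    refine lt_min (lt_min (by positivity) (by positivity)) (by positivity)
  have hε1 : ε ≤ 1/(2*M) := le_trans (min_le_left _ _) (min_le_left _ _)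
  have hε2 : ε ≤ 1/(2*(-m)) := le_trans (min_le_left _ _) (min_le_right _ _)
  have hε3 : ε ≤ 1/(1 + n*(M-m)) := min_le_right _ _
  have hεinv : 1 + n*(M-m) ≤ 1/ε := by
    rw [le_div_iff₀ hε]
    calc (1 + n*(M-m)) * ε ≤ (1 + n*(M-m)) * (1/(1 + n*(M-m))) :=
          mul_le_mul_of_nonneg_left hε3 hC.le
      _ = 1 := mul_one_div_cancel hC.ne'
  have h2M : 1/(2*M) < 1/M := by
    rw [div_lt_div_iff₀ (by positivity) hmax]; nlinarith
  have h2m : 1/(2*(-m)) < 1/(-m) := by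
    rw [div_lt_div_iff₀ (by positivity) hmneg]; nlinarith
  set a : ℝ := -1/M + ε with hadef
  set b : ℝ := -1/m - ε with hbdef
  have ha_neg : a < 0 := by rw [hadef, hnegM]; linarith
  have hb_pos : 0 < b := by rw [hbdef, hminv']; linarith
  have ha_mem : a ∈ Set.Ioo (-1/M) (-1/m) := by
    constructor
    · rw [hadef]; linarith
    · rw [hminv']; linarith
  have hb_mem : b ∈ Set.Ioo (-1/M) (-1/m) := by
    constructor
    · rw [hnegM]; linarith
    · rw [hbdef]; linarith
  have hab : a ≤ b := by linarith
  have hsub : Set.Icc a b ⊆ Set.Ioo (-1/M) (-1/m) := fun x hx =>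
    ⟨lt_of_lt_of_le ha_mem.1 hx.1, lt_of_le_of_lt hx.2 hb_mem.2⟩
  have hcont : ContinuousOn (fun lam : ℝ => ∑ i, h i / (1 + lam * h i)) (Set.Icc a b) := by
    apply continuousOn_finset_sum
    intro i _
    refine ContinuousOn.div continuousOn_const
      ((continuous_const.add (continuous_id.mul continuous_const)).continuousOn)
      (fun x hx => (key x (hsub hx) i).ne')
  obtain ⟨i0, _, hi0⟩ := exists_mem_eq_sup' hne h
  obtain ⟨i1, _, hi1⟩ := exists_mem_eq_inf' hne h
  rw [← hMdef] at hi0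
  rw [← hmdef] at hi1
  have hub : ∀ i, h i ≤ M := fun i => le_sup' h (mem_univ i)
  have hlb : ∀ i, m ≤ h i := fun i => inf'_le h (mem_univ i)
  clear_value M m ε a b
  have hn1 : (1:ℝ) ≤ (n:ℝ) := by exact_mod_cast hn
  have hnM : (0:ℝ) < (n:ℝ) * M := by positivity
  have hnm : (n:ℝ) * m ≤ 0 := by nlinarith [mul_nonneg (Nat.cast_nonneg (α := ℝ) n) hmneg.le]
  have hFa : 0 < ∑ i, h i / (1 + a * h i) := by
    have hda : 1 + a * h i0 = ε * M := by
      rw [← hi0, hadef]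
      field_simp
      ring
    have hterm0 : h i0 / (1 + a * h i0) = 1/ε := by
      rw [hda, ← hi0]
      rw [div_eq_div_iff (by positivity : (0:ℝ) < ε*M).ne' hε.ne']
      ring
    have hothers : ∀ i ∈ univ.erase i0, m ≤ h i / (1 + a * h i) := by
      intro i _
      have hd : 0 < 1 + a * h i := key a ha_mem i
      rcases le_or_gt 0 (h i) with hi | hi
      · exact le_trans hmin.le (div_nonneg hi hd.le)
      · rw [le_div_iff₀ hd]
        have hah : 0 < a * h i := mul_pos_of_neg_of_neg ha_neg hi
        have hexp : m * (1 + a * h i) = m + m * (a * h i) := by ring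
        have hneg : m * (a * h i) ≤ 0 := mul_nonpos_of_nonpos_of_nonneg hmin.le hah.le
        linarith [hlb i]
    have hsum : (∑ i, h i / (1 + a * h i)) = (∑ i ∈ univ.erase i0, h i / (1 + a * h i)) + 1/ε := by
      rw [← hterm0]
      exact (Finset.sum_erase_add _ _ (mem_univ i0)).symm
    have hcard : ((univ.erase i0).card : ℝ) = (n:ℝ) - 1 := by
      rw [Finset.card_erase_of_mem (mem_univ i0), Finset.card_univ, Fintype.card_fin,
        Nat.cast_sub hn]; simp
    have hlow : ((n:ℝ) - 1) * m ≤ ∑ i ∈ univ.erase i0, h i / (1 + a * h i) := by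
      calc ((n:ℝ) - 1) * m = ((univ.erase i0).card : ℝ) * m := by rw [hcard]
        _ = ∑ _i ∈ univ.erase i0, m := by rw [Finset.sum_const, nsmul_eq_mul]
        _ ≤ _ := Finset.sum_le_sum hothers
    have hid : ((n:ℝ) - 1) * m + (1 + (n:ℝ)*(M-m)) = 1 + (n:ℝ)*M - m := by ring
    rw [hsum]
    linarith
  have hFb : (∑ i, h i / (1 + b * h i)) < 0 := by
    have hdb : 1 + b * h i1 = ε * (-m) := by
      rw [← hi1, hbdef]
      field_simp [hmin.ne]
      ring
    have hterm1 : h i1 / (1 + b * h i1) = -(1/ε) := by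
      rw [hdb, ← hi1, div_eq_iff (by positivity : (0:ℝ) < ε*(-m)).ne']
      field_simp
    have hothers : ∀ i ∈ univ.erase i1, h i / (1 + b * h i) ≤ M := by
      intro i _
      have hd : 0 < 1 + b * h i := key b hb_mem i
      rcases le_or_gt (h i) 0 with hi | hi
      · exact le_trans (div_nonpos_of_nonpos_of_nonneg hi hd.le) hmax.le
      · rw [div_le_iff₀ hd]
        have hbh : 0 < b * h i := mul_pos hb_pos hi
        have hexp : M * (1 + b * h i) = M + M * (b * h i) := by ring
        have hpos : 0 ≤ M * (b * h i) := mul_nonneg hmax.le hbh.le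
        linarith [hub i]
    have hsum : (∑ i, h i / (1 + b * h i)) = (∑ i ∈ univ.erase i1, h i / (1 + b * h i)) + (-(1/ε)) := by
      rw [← hterm1]
      exact (Finset.sum_erase_add _ _ (mem_univ i1)).symm
    have hcard : ((univ.erase i1).card : ℝ) = (n:ℝ) - 1 := by
      rw [Finset.card_erase_of_mem (mem_univ i1), Finset.card_univ, Fintype.card_fin,
        Nat.cast_sub hn]; simp
    have hhigh : (∑ i ∈ univ.erase i1, h i / (1 + b * h i)) ≤ ((n:ℝ) - 1) * M := by
      calc (∑ i ∈ univ.erase i1, h i / (1 + b * h i)) ≤ ∑ _i ∈ univ.erase i1, M :=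
            Finset.sum_le_sum hothers
        _ = ((univ.erase i1).card : ℝ) * M := by rw [Finset.sum_const, nsmul_eq_mul]
        _ = ((n:ℝ) - 1) * M := by rw [hcard]
    have hid : ((n:ℝ) - 1) * M - (1 + (n:ℝ)*(M-m)) = (n:ℝ)*m - 1 - M := by ring
    rw [hsum]
    linarith
  have hmem : (0:ℝ) ∈ Set.Icc (∑ i, h i / (1 + b * h i)) (∑ i, h i / (1 + a * h i)) := ⟨hFb.le, hFa.le⟩
  obtain ⟨lam, hlam, hFlam⟩ := intermediate_value_Icc' hab hcont hmem
  exact ⟨lam, hsub hlam, hFlam, fun i => key lam (hsub hlam) i⟩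
end

section
/- Let h̃_1, ..., h̃_n be real numbers, λ ∈ ℝ with 1 + λh̃_i > 0 for all i and ∑_i h̃_i/(1 + λh̃_i) = 0. Let h̄ = (1/n)∑_i h̃_i and s = (1/n)∑_i h̃_i². Then h̄ = λ·(1/n)∑_i h̃_i²/(1 + λh̃_i), and consequently |λ|·(s - |h̄|·max_i |h̃_i|) ≤ |h̄|. -/
open Finset

/-- Empirical likelihood Lagrange multiplier bound: if `1 + λ h̃_i > 0` for all `i`
and `∑ i, h̃_i/(1 + λ h̃_i) = 0`, then with `h̄ = (1/n) ∑ h̃_i` and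
`s = (1/n) ∑ h̃_i²`, one has `h̄ = λ (1/n) ∑ h̃_i²/(1 + λ h̃_i)` and
`|λ| (s - |h̄| max_i |h̃_i|) ≤ |h̄|`. -/
theorem el_multiplier_bound (n : ℕ) (hn : 1 ≤ n) (h : Fin n → ℝ)
    (hne : (Finset.univ : Finset (Fin n)).Nonempty)
    (lam : ℝ) (hpos : ∀ i, 0 < 1 + lam * h i)
    (hroot : ∑ i, h i / (1 + lam * h i) = 0) :
    (1 / (n : ℝ)) * ∑ i, h i
      = lam * ((1 / (n : ℝ)) * ∑ i, (h i) ^ 2 / (1 + lam * h i)) ∧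
    |lam| * ((1 / (n : ℝ)) * ∑ i, (h i) ^ 2
        - |(1 / (n : ℝ)) * ∑ i, h i| * univ.sup' hne (fun i => |h i|))
      ≤ |(1 / (n : ℝ)) * ∑ i, h i| := by
  have hn' : (0:ℝ) < n := by exact_mod_cast Nat.lt_of_lt_of_le Nat.zero_lt_one hn
  set M := univ.sup' hne (fun i => |h i|) with hM
  obtain ⟨i0, _⟩ := hne
  have hM0 : 0 ≤ M := le_trans (abs_nonneg (h i0)) (le_sup' (fun i => |h i|) (mem_univ i0))
  have h1 : ∑ i, h i = lam * ∑ i, h i ^ 2 / (1 + lam * h i) := by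
    have hkey : ∀ i, h i = h i / (1 + lam * h i) + lam * (h i ^ 2 / (1 + lam * h i)) := by
      intro i
      have := (hpos i).ne'
      rw [mul_div_assoc', ← add_div, eq_div_iff this]
      ring
    calc ∑ i, h i
        = ∑ i, (h i / (1 + lam * h i) + lam * (h i ^ 2 / (1 + lam * h i))) :=
          Finset.sum_congr rfl fun i _ => hkey i
      _ = (∑ i, h i / (1 + lam * h i)) + lam * ∑ i, h i ^ 2 / (1 + lam * h i) := by
          rw [Finset.sum_add_distrib, Finset.mul_sum]
      _ = lam * ∑ i, h i ^ 2 / (1 + lam * h i) := by rw [hroot]; ring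
  have hsumpos : 0 ≤ ∑ i, h i ^ 2 / (1 + lam * h i) := by
    apply Finset.sum_nonneg
    intro i _
    exact div_nonneg (sq_nonneg _) (hpos i).le
  have hD : 0 < 1 + |lam| * M := by positivity
  have hle : ∀ i, h i ^ 2 / (1 + |lam| * M) ≤ h i ^ 2 / (1 + lam * h i) := by
    intro i
    apply div_le_div_of_nonneg_left (sq_nonneg _) (hpos i)
    have h1 : lam * h i ≤ |lam| * |h i| := by
      calc lam * h i ≤ |lam * h i| := le_abs_self _
        _ = |lam| * |h i| := abs_mul _ _
    have h2 : |h i| ≤ M := le_sup' (fun i => |h i|) (mem_univ i)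
    nlinarith [abs_nonneg lam]
  have hsumle : (∑ i, h i ^ 2) / (1 + |lam| * M) ≤ ∑ i, h i ^ 2 / (1 + lam * h i) := by
    rw [Finset.sum_div]
    exact Finset.sum_le_sum fun i _ => hle i
  have habs : |∑ i, h i| = |lam| * ∑ i, h i ^ 2 / (1 + lam * h i) := by
    rw [h1, abs_mul, abs_of_nonneg hsumpos]
  refine ⟨by rw [h1]; ring, ?_⟩
  have key : |lam| * (∑ i, h i ^ 2) ≤ |∑ i, h i| * (1 + |lam| * M) := by
    rw [habs]
    have := mul_le_mul_of_nonneg_left hsumle (abs_nonneg lam)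
    calc |lam| * (∑ i, h i ^ 2)
        = |lam| * ((∑ i, h i ^ 2) / (1 + |lam| * M)) * (1 + |lam| * M) := by
          field_simp
      _ ≤ |lam| * (∑ i, h i ^ 2 / (1 + lam * h i)) * (1 + |lam| * M) :=
          mul_le_mul_of_nonneg_right this hD.le
  have habs2 : |(1 / (n:ℝ)) * ∑ i, h i| = (1 / (n:ℝ)) * |∑ i, h i| := by
    rw [abs_mul, abs_of_pos (by positivity : (0:ℝ) < 1 / (n:ℝ))]
  rw [habs2]
  have hinv : (0:ℝ) < 1 / (n:ℝ) := by positivity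
  nlinarith [mul_le_mul_of_nonneg_left key hinv.le, abs_nonneg (∑ i, h i), abs_nonneg lam]
end

section
/- Let h_1, ..., h_n be real numbers with sample mean ĥ = (1/n)∑_i h_i and sample variance σ̂² = (1/n)∑_i (h_i - ĥ)² > 0, and let q > 0. Suppose max_i |h_i - ĥ|·√q/(√n·σ̂) < 1. Then the weights w_i = (1/n)(1 + (h_i - ĥ)√q/(√n σ̂)·(1 - C/√n)) with 0 ≤ 1 - C/√n ≤ 1 are nonnegative, sum to 1, and satisfy ∑_i w_i h_i = ĥ + √q·σ̂/√n·(1 - C/√n). -/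
open Finset

/-- Primal feasible weights achieve mean shifted by roughly `√q σ̂ / √n`:
with `ĥ` the sample mean, `σ̂` the sample standard deviation (assumed positive),
`q > 0`, `0 ≤ 1 - C/√n ≤ 1`, and `max_i |h_i - ĥ| √q / (√n σ̂) < 1`, the weights
`w_i = (1/n)(1 + (h_i - ĥ)√q/(√n σ̂)(1 - C/√n))` are nonnegative, sum to 1, and
satisfy `∑ w_i h_i = ĥ + √q σ̂ / √n · (1 - C/√n)`. -/
theorem tilted_weights_value (n : ℕ) (hn : 1 ≤ n) (h : Fin n → ℝ)
    (hne : (Finset.univ : Finset (Fin n)).Nonempty)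
    (hbar σ q C : ℝ)
    (hhbar : hbar = (1 / (n : ℝ)) * ∑ i, h i)
    (hσ : σ = Real.sqrt ((1 / (n : ℝ)) * ∑ i, (h i - hbar) ^ 2))
    (hσpos : 0 < (1 / (n : ℝ)) * ∑ i, (h i - hbar) ^ 2)
    (hq : 0 < q)
    (hC0 : 0 ≤ 1 - C / Real.sqrt n) (hC1 : 1 - C / Real.sqrt n ≤ 1)
    (hsmall : univ.sup' hne (fun i => |h i - hbar|) * Real.sqrt q
        / (Real.sqrt n * σ) < 1) :
    (∀ i, 0 ≤ (1 / (n : ℝ)) * (1 + (h i - hbar) * Real.sqrt q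
        / (Real.sqrt n * σ) * (1 - C / Real.sqrt n))) ∧
    (∑ i, (1 / (n : ℝ)) * (1 + (h i - hbar) * Real.sqrt q
        / (Real.sqrt n * σ) * (1 - C / Real.sqrt n)) = 1) ∧
    (∑ i, ((1 / (n : ℝ)) * (1 + (h i - hbar) * Real.sqrt q
        / (Real.sqrt n * σ) * (1 - C / Real.sqrt n))) * h i
      = hbar + Real.sqrt q * σ / Real.sqrt n * (1 - C / Real.sqrt n)) := by
  have npos : (0:ℝ) < n := by exact_mod_cast hn
  have hsqn : 0 < Real.sqrt n := Real.sqrt_pos.mpr npos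
  have hσp : 0 < σ := hσ ▸ Real.sqrt_pos.mpr hσpos
  have hsqq : 0 < Real.sqrt q := Real.sqrt_pos.mpr hq
  have hden : 0 < Real.sqrt n * σ := mul_pos hsqn hσp
  have S0 : ∑ i, (h i - hbar) = 0 := by
    rw [Finset.sum_sub_distrib, Finset.sum_const, Finset.card_univ, Fintype.card_fin]
    have hs : ∑ i, h i = n * hbar := by
      rw [hhbar]; field_simp
    rw [hs, nsmul_eq_mul]; ring
  have S2 : ∑ i, (h i - hbar) ^ 2 = n * σ ^ 2 := by
    have hs : σ ^ 2 = (1 / (n : ℝ)) * ∑ i, (h i - hbar) ^ 2 := by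
      rw [hσ, Real.sq_sqrt hσpos.le]
    rw [hs]; field_simp
  have key : ∀ i, 0 ≤ (1 / (n : ℝ)) * (1 + (h i - hbar) * Real.sqrt q
      / (Real.sqrt n * σ) * (1 - C / Real.sqrt n)) := by
    intro i
    have hle : |h i - hbar| ≤ univ.sup' hne (fun i => |h i - hbar|) :=
      Finset.le_sup' (fun i => |h i - hbar|) (Finset.mem_univ i)
    have h1 : |h i - hbar| * Real.sqrt q / (Real.sqrt n * σ) < 1 := by
      calc |h i - hbar| * Real.sqrt q / (Real.sqrt n * σ)
          ≤ univ.sup' hne (fun i => |h i - hbar|) * Real.sqrt q / (Real.sqrt n * σ) := by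
            gcongr
        _ < 1 := hsmall
    have habs : |(h i - hbar) * Real.sqrt q / (Real.sqrt n * σ)| < 1 := by
      rwa [abs_div, abs_mul, abs_of_pos hsqq, abs_of_pos hden]
    have h2 := neg_lt_of_abs_lt habs
    set x := (h i - hbar) * Real.sqrt q / (Real.sqrt n * σ)
    have hx : 0 ≤ 1 + x * (1 - C / Real.sqrt n) := by nlinarith
    positivity
  refine ⟨key, ?_, ?_⟩
  · have hs : ∑ i, (1 / (n : ℝ)) * (1 + (h i - hbar) * Real.sqrt q
        / (Real.sqrt n * σ) * (1 - C / Real.sqrt n))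
        = (1 / (n : ℝ)) * ((n : ℝ) + (∑ i, (h i - hbar)) * (Real.sqrt q
        / (Real.sqrt n * σ) * (1 - C / Real.sqrt n))) := by
      rw [← Finset.mul_sum]
      congr 1
      rw [Finset.sum_add_distrib, Finset.sum_const, Finset.card_univ, Fintype.card_fin,
        nsmul_eq_mul, mul_one, Finset.sum_mul]
      congr 1
      apply Finset.sum_congr rfl
      intro i _
      ring
    rw [hs, S0]; field_simp; ring
  · have expand : ∀ i, ((1 / (n : ℝ)) * (1 + (h i - hbar) * Real.sqrt q
        / (Real.sqrt n * σ) * (1 - C / Real.sqrt n))) * h i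
        = (1 / (n : ℝ)) * h i + (1 / (n : ℝ)) * (Real.sqrt q / (Real.sqrt n * σ)
          * (1 - C / Real.sqrt n)) * ((h i - hbar) * h i) := by
      intro i; field_simp
    simp_rw [expand]
    rw [Finset.sum_add_distrib, ← Finset.mul_sum, ← Finset.mul_sum, ← hhbar]
    have key2 : ∑ i, (h i - hbar) * h i = n * σ ^ 2 := by
      have hs : ∀ i, (h i - hbar) * h i = (h i - hbar) ^ 2 + hbar * (h i - hbar) := by
        intro i; ring
      simp_rw [hs]
      rw [Finset.sum_add_distrib, S2, ← Finset.mul_sum, S0]; ring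
    rw [key2]
    have hσsq : σ ^ 2 = σ * σ := sq σ
    field_simp
end
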